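/- The Laurent polynomial f = (u² v + u v² − 3uv + 1) is irreducible over ℚ and vanishes to order exactly 2 at (u,v) = (1,1), i.e. f(1,1) = 0, ∂f/∂u(1,1) = 0, ∂f/∂v(1,1) = 0, and some second partial derivative of f at (1,1) is nonzero. -/

import Mathlib

open MvPolynomial

noncomputable def myEquiv : MvPolynomial (Fin 2) ℚ ≃ₐ[ℚ] Polynomial (Polynomial ℚ) :=
  (finSuccEquiv ℚ 1).trans <| Polynomial.mapAlgEquiv <|
    (finSuccEquiv ℚ 0).trans <| Polynomial.mapAlgEquiv (isEmptyAlgEquiv ℚ (Fin 0))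

noncomputable def pAux : Polynomial (Polynomial ℚ) :=
  Polynomial.C Polynomial.X * Polynomial.X ^ 2
    + Polynomial.C (Polynomial.X ^ 2 - 3 * Polynomial.X) * Polynomial.X + 1

namespace PAux
open Polynomial

lemma p_coeff0 : pAux.coeff 0 = 1 := by
  simp only [pAux, Polynomial.coeff_add, Polynomial.coeff_C_mul, Polynomial.coeff_X_pow, Polynomial.coeff_X, Polynomial.coeff_one]
  norm_num

lemma p_coeff1 : pAux.coeff 1 = Polynomial.X ^ 2 - 3 * Polynomial.X := by
  simp only [pAux, Polynomial.coeff_add, Polynomial.coeff_C_mul, Polynomial.coeff_X_pow, Polynomial.coeff_X, Polynomial.coeff_one]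
  norm_num

lemma p_coeff2 : pAux.coeff 2 = Polynomial.X := by
  simp only [pAux, Polynomial.coeff_add, Polynomial.coeff_C_mul, Polynomial.coeff_X_pow, Polynomial.coeff_X, Polynomial.coeff_one]
  norm_num

lemma p_natDegree : pAux.natDegree = 2 := by
  have h2 : pAux.coeff 2 ≠ 0 := by rw [p_coeff2]; exact X_ne_zero
  have hle : pAux.natDegree ≤ 2 := by unfold pAux; compute_degree
  exact le_antisymm hle (le_natDegree_of_ne_zero h2)

lemma p_ne_zero : pAux ≠ 0 := fun h => by simpa [h] using p_coeff0

lemma deg_middle : (Polynomial.X ^ 2 - 3 * Polynomial.X : Polynomial ℚ).natDegree = 2 := by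
  compute_degree!

lemma p_not_unit : ¬ IsUnit pAux := fun h => by
  have := natDegree_eq_zero_of_isUnit h
  rw [p_natDegree] at this; exact two_ne_zero this

lemma p_irred : Irreducible pAux := by
  refine ⟨p_not_unit, fun a b hab => ?_⟩
  have ha : a ≠ 0 := fun h => p_ne_zero (by simp [hab, h])
  have hb : b ≠ 0 := fun h => p_ne_zero (by simp [hab, h])
  have h00 : a.coeff 0 * b.coeff 0 = 1 := by
    rw [← mul_coeff_zero, ← hab, p_coeff0]
  have hua : IsUnit (a.coeff 0) := IsUnit.of_mul_eq_one _ h00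
  have hub : IsUnit (b.coeff 0) := IsUnit.of_mul_eq_one _ (by rwa [mul_comm] at h00)
  have hdeg : a.natDegree + b.natDegree = 2 := by
    rw [← natDegree_mul ha hb, ← hab, p_natDegree]
  rcases Nat.eq_zero_or_pos a.natDegree with h0 | hpa
  · left
    rw [eq_C_of_natDegree_eq_zero h0]
    exact hua.map Polynomial.C
  rcases Nat.eq_zero_or_pos b.natDegree with h0 | hpb
  · right
    rw [eq_C_of_natDegree_eq_zero h0]
    exact hub.map Polynomial.C
  exfalso
  have ha1 : a.natDegree = 1 := by omega
  have hb1 : b.natDegree = 1 := by omega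
  have hlead : a.coeff 1 * b.coeff 1 = Polynomial.X := by
    have := leadingCoeff_mul a b
    rw [← hab] at this
    rw [leadingCoeff, leadingCoeff, leadingCoeff, p_natDegree, ha1, hb1] at this
    rw [← this, p_coeff2]
  have ha1' : a.coeff 1 ≠ 0 := fun h => by
    have := leadingCoeff_ne_zero.mpr ha
    rw [leadingCoeff, ha1] at this; exact this h
  have hb1' : b.coeff 1 ≠ 0 := fun h => by
    have := leadingCoeff_ne_zero.mpr hb
    rw [leadingCoeff, hb1] at this; exact this h
  have hdsum : (a.coeff 1).natDegree + (b.coeff 1).natDegree = 1 := by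
    rw [← Polynomial.natDegree_mul ha1' hb1', hlead, natDegree_X]
  have hmid : a.coeff 0 * b.coeff 1 + a.coeff 1 * b.coeff 0
      = Polynomial.X ^ 2 - 3 * Polynomial.X := by
    rw [← p_coeff1, hab, Polynomial.coeff_mul]
    rw [Finset.Nat.antidiagonal_succ]
    simp [Prod.map, Finset.sum_pair (by decide : ((0:ℕ),(1:ℕ)) ≠ (1,0))]
  have hda : (a.coeff 0).natDegree = 0 := natDegree_eq_zero_of_isUnit hua
  have hdb : (b.coeff 0).natDegree = 0 := natDegree_eq_zero_of_isUnit hub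
  have h1 : (a.coeff 0 * b.coeff 1 + a.coeff 1 * b.coeff 0).natDegree ≤ 1 := by
    refine le_trans (natDegree_add_le _ _) ?_
    refine max_le (le_trans (natDegree_mul_le) ?_) (le_trans (natDegree_mul_le) ?_) <;> omega
  rw [hmid, deg_middle] at h1
  omega

end PAux

lemma myEquiv_f :
    myEquiv (X 0 ^ 2 * X 1 + X 0 * X 1 ^ 2 - 3 * (X 0 * X 1) + 1) = pAux := by
  have h0 : myEquiv (X 0) = Polynomial.X := by
    rw [myEquiv]
    simp only [AlgEquiv.trans_apply, finSuccEquiv_X_zero, Polynomial.coe_mapAlgEquiv,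
      Polynomial.map_X]
  have h1 : myEquiv (X 1) = Polynomial.C Polynomial.X := by
    rw [myEquiv]
    simp only [AlgEquiv.trans_apply]
    rw [show (1 : Fin 2) = (0 : Fin 1).succ from rfl, finSuccEquiv_X_succ]
    rw [Polynomial.coe_mapAlgEquiv, Polynomial.map_C]
    congr 1
    simp [finSuccEquiv_X_zero]
  simp only [map_add, map_sub, map_mul, map_pow, map_one, map_ofNat, h0, h1, pAux]
  ring

/-- The polynomial `u²v + uv² − 3uv + 1` is irreducible over ℚ and vanishes to
order exactly 2 at `(1,1)`. -/
theorem uv_polynomial_irreducible_mult_two :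
    let f : MvPolynomial (Fin 2) ℚ :=
      X 0 ^ 2 * X 1 + X 0 * X 1 ^ 2 - 3 * (X 0 * X 1) + 1
    Irreducible f ∧
    eval (fun _ => (1 : ℚ)) f = 0 ∧
    eval (fun _ => (1 : ℚ)) (pderiv 0 f) = 0 ∧
    eval (fun _ => (1 : ℚ)) (pderiv 1 f) = 0 ∧
    ∃ i j : Fin 2, eval (fun _ => (1 : ℚ)) (pderiv i (pderiv j f)) ≠ 0 := by
  intro f
  have h3 : ∀ i : Fin 2, pderiv i (3 : MvPolynomial (Fin 2) ℚ) = 0 := fun i => by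
    rw [← map_ofNat (C : ℚ →+* MvPolynomial (Fin 2) ℚ) 3, pderiv_C]
  have h2 : ∀ i : Fin 2, pderiv i (2 : MvPolynomial (Fin 2) ℚ) = 0 := fun i => by
    rw [← map_ofNat (C : ℚ →+* MvPolynomial (Fin 2) ℚ) 2, pderiv_C]
  refine ⟨?_, ?_, ?_, ?_, 0, 0, ?_⟩
  · exact (MulEquiv.irreducible_iff myEquiv).mp (myEquiv_f ▸ PAux.p_irred)
  · simp [f]; norm_num
  · simp [f, pderiv_X, h3, h2]; norm_num
  · simp [f, pderiv_X, h3, h2]; norm_num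
  · simp [f, pderiv_X, h3, h2]
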